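/- Let (S, A) be a partial affine plane of order n (n ≥ 2) with b = n² − a lines, where 1 ≤ a ≤ n − 1, and suppose no point has valency n + 1. Then there are at most n·a points of S of valency less than n. -/
import Mathlib


open Finset

/-- The valency of a point `X`: the number of lines of `B` containing `X`. -/
def valency {α : Type*} [DecidableEq α] (B : Finset (Finset α)) (X : α) : ℕ :=
  (B.filter (fun L => X ∈ L)).card

/-- in a partial affine plane of order n with n² − a lines (1 ≤ a ≤ n − 1)
and no point of valency n + 1, there are at most n·a points of valency less than n. -/
theorem stmt_7 {α : Type*} [DecidableEq α] (n a : ℕ) (hn : 2 ≤ n)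
    (ha1 : 1 ≤ a) (ha2 : a ≤ n - 1)
    (S : Finset α) (A : Finset (Finset α))
    (hS : S.card = n ^ 2)
    (hlines : ∀ L ∈ A, L ⊆ S ∧ L.card = n)
    (hmeet : ∀ L ∈ A, ∀ M ∈ A, L ≠ M → (L ∩ M).card ≤ 1)
    (hb : A.card = n ^ 2 - a)
    (hnofull : ∀ P ∈ S, valency A P ≠ n + 1) :
    (S.filter (fun P => valency A P < n)).card ≤ n * a := by
  classical
  -- Step 1: every point of S has valency ≤ n.
  have hval : ∀ P ∈ S, valency A P ≤ n := by
    intro P hP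
    have h1 : valency A P ≤ n + 1 := by
      set B := A.filter (fun L => P ∈ L) with hBdef
      have hdisj : ∀ L ∈ B, ∀ M ∈ B, L ≠ M → Disjoint (L.erase P) (M.erase P) := by
        intro L hL M hM hLM
        rw [Finset.mem_filter] at hL hM
        refine Finset.disjoint_left.mpr (fun x hxL hxM => ?_)
        have hx := Finset.mem_erase.mp hxL
        have hx' := Finset.mem_erase.mp hxM
        have hcard := hmeet L hL.1 M hM.1 hLM
        have hsub : ({P, x} : Finset α) ⊆ L ∩ M := by
          intro y hy
          rcases Finset.mem_insert.mp hy with rfl | hy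
          · exact Finset.mem_inter.mpr ⟨hL.2, hM.2⟩
          · rw [Finset.mem_singleton] at hy; subst hy
            exact Finset.mem_inter.mpr ⟨hx.2, hx'.2⟩
        have h2 : ({P, x} : Finset α).card = 2 := by
          rw [Finset.card_insert_of_notMem (by simp [Ne.symm hx.1]), Finset.card_singleton]
        have := Finset.card_le_card hsub
        omega
      have hsub : B.biUnion (fun L => L.erase P) ⊆ S.erase P := by
        intro x hx
        rcases Finset.mem_biUnion.mp hx with ⟨L, hL, hxL⟩
        rw [Finset.mem_filter] at hL
        have hx' := Finset.mem_erase.mp hxL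
        exact Finset.mem_erase.mpr ⟨hx'.1, (hlines L hL.1).1 hx'.2⟩
      have hcardU : (B.biUnion (fun L => L.erase P)).card = ∑ L ∈ B, (L.erase P).card :=
        Finset.card_biUnion hdisj
      have hterm : ∀ L ∈ B, (L.erase P).card = n - 1 := by
        intro L hL
        rw [Finset.mem_filter] at hL
        rw [Finset.card_erase_of_mem hL.2, (hlines L hL.1).2]
      have hsumeq : ∑ L ∈ B, (L.erase P).card = B.card * (n - 1) := by
        rw [Finset.sum_congr rfl hterm, Finset.sum_const, smul_eq_mul]
      have hle : B.card * (n - 1) ≤ n ^ 2 - 1 := by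
        have := Finset.card_le_card hsub
        rw [hcardU, hsumeq] at this
        rwa [Finset.card_erase_of_mem hP, hS] at this
      have hfac : n ^ 2 - 1 = (n + 1) * (n - 1) := by
        obtain ⟨k, rfl⟩ : ∃ k, n = k + 2 := ⟨n - 2, by omega⟩
        have e1 : (k + 2) ^ 2 = k * k + 4 * k + 4 := by ring
        have e2 : (k + 2 + 1) * (k + 2 - 1) = k * k + 4 * k + 3 := by
          have : k + 2 - 1 = k + 1 := rfl
          rw [this]; ring
        omega
      rw [hfac] at hle
      have := Nat.le_of_mul_le_mul_right (hle.trans_eq rfl) (by omega : 0 < n - 1)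
      exact this
    have := hnofull P hP
    omega
  -- Step 2: double counting
  have hsum : ∑ P ∈ S, valency A P = A.card * n := by
    unfold valency
    have : ∀ P ∈ S, (A.filter (fun L => P ∈ L)).card = ∑ L ∈ A, if P ∈ L then 1 else 0 := by
      intro P _; rw [Finset.card_filter]
    rw [Finset.sum_congr rfl this, Finset.sum_comm]
    have : ∀ L ∈ A, (∑ P ∈ S, if P ∈ L then 1 else 0) = n := by
      intro L hL
      rw [← Finset.card_filter]
      have : S.filter (fun P => P ∈ L) = L := by
        ext x
        simp only [Finset.mem_filter]
        exact ⟨fun h => h.2, fun h => ⟨(hlines L hL).1 h, h⟩⟩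
      rw [this, (hlines L hL).2]
    rw [Finset.sum_congr rfl this, Finset.sum_const, smul_eq_mul]
  -- Step 3: bound the sum from above
  set m := (S.filter (fun P => valency A P < n)).card with hm
  have hsplit : ∑ P ∈ S, valency A P =
      (∑ P ∈ S.filter (fun P => valency A P < n), valency A P) +
      ∑ P ∈ S.filter (fun P => ¬ valency A P < n), valency A P :=
    (Finset.sum_filter_add_sum_filter_not S _ _).symm
  have hb1 : (∑ P ∈ S.filter (fun P => valency A P < n), valency A P) ≤ m * (n - 1) := by
    rw [hm]
    apply Finset.sum_le_card_nsmul
    intro x hx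
    rw [Finset.mem_filter] at hx
    omega
  have hb2 : (∑ P ∈ S.filter (fun P => ¬ valency A P < n), valency A P) ≤ (n ^ 2 - m) * n := by
    have hc : (S.filter (fun P => ¬ valency A P < n)).card = n ^ 2 - m := by
      have := Finset.card_filter_add_card_filter_not (s := S)
        (p := fun P => valency A P < n)
      omega
    calc (∑ P ∈ S.filter (fun P => ¬ valency A P < n), valency A P)
        ≤ (S.filter (fun P => ¬ valency A P < n)).card * n := by
          apply Finset.sum_le_card_nsmul
          intro x hx
          rw [Finset.mem_filter] at hx
          exact hval x hx.1
      _ = (n ^ 2 - m) * n := by rw [hc]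
  have hmle : m ≤ n ^ 2 := by
    rw [hm, ← hS]; exact Finset.card_le_card (Finset.filter_subset _ _)
  have haN : a ≤ n ^ 2 := by
    have : n ≤ n ^ 2 := by nlinarith
    omega
  have main : (n ^ 2 - a) * n ≤ m * (n - 1) + (n ^ 2 - m) * n := by
    rw [← hb, ← hsum]; omega
  have h1n : 1 ≤ n := by omega
  zify [hmle, haN, h1n] at main
  nlinarith [main]
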